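/- The Wiener-Fliess composition product turns Cauchy products into shuffle products: for d, d' ∈ ℝ^k[[X̃]] (commuting variables, |X̃| = ℓ) and a proper series c ∈ ℝ^ℓ_p⟨⟨X⟩⟩, one has (d·d') ∘̂ c = (d ∘̂ c) ⧢ (d' ∘̂ c), where d ∘̂ c = Σ_{η∈X̃*} (d,η) c^{⧢η} with c^{⧢ x̃_i η} = c_i ⧢ c^{⧢η} and c^{⧢∅} = 1. Consequently, for purely improper d, d^{−1} ∘̂ c = (d ∘̂ c)^{⧢−1}. -/

import Mathlib

open scoped BigOperators

namespace FPS

/-- A (noncommutative) formal power series over alphabet `X` is a map from words to `ℝ`. -/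
abbrev Series (X : Type*) := List X → ℝ

noncomputable section

variable {X : Type*} [DecidableEq X]

/-- The series `1·∅`. -/
def one : Series X := fun η => if η = [] then 1 else 0

/-- Cauchy (concatenation) product. -/
def cauchy (c d : Series X) : Series X := fun η =>
  ∑ i ∈ Finset.range (η.length + 1), c (η.take i) * d (η.drop i)

/-- Shuffle product. -/
def sh (c d : Series X) : List X → ℝ
  | [] => c [] * d []
  | x :: t => sh (fun w => c (x :: w)) d t + sh c (fun w => d (x :: w)) t

/-- Cauchy powers. -/
def cpow (c : Series X) : ℕ → Series X
  | 0 => one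
  | k + 1 => cauchy c (cpow c k)

/-- Shuffle powers. -/
def shpow (c : Series X) : ℕ → Series X
  | 0 => one
  | k + 1 => sh c (shpow c k)

/-- The proper series `1 - s/(s,∅)` entering the inverse formulas (negated proper part of `s/(s,∅)`). -/
def sprime (s : Series X) : Series X := fun w => if w = [] then 0 else - (s w / s [])

/-- Cauchy inverse `(s,∅)⁻¹ Σ_k (s')^k` of a purely improper series. -/
def cInv (s : Series X) : Series X := fun η =>
  (s [])⁻¹ * ∑ k ∈ Finset.range (η.length + 1), cpow (sprime s) k η

/-- Shuffle inverse `(s,∅)⁻¹ Σ_k (s')^{⧢k}` of a purely improper series. -/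
def shInv (s : Series X) : Series X := fun η =>
  (s [])⁻¹ * ∑ k ∈ Finset.range (η.length + 1), shpow (sprime s) k η

/-- The order: minimal length of a word in the support (`⊤` for the zero series). -/
def ord (c : Series X) : ℕ∞ := sInf ((fun η : List X => (η.length : ℕ∞)) '' {η | c η ≠ 0})

/-- `σ^n` with `σ^⊤ = 0`. -/
def powE (σ : ℝ) : ℕ∞ → ℝ := fun n => if n = ⊤ then 0 else σ ^ n.toNat

/-- The ultrametric `κ(c,d) = σ^{ord(c-d)}`. -/
def kappa (σ : ℝ) (c d : Series X) : ℝ := powE σ (ord (c - d))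

/-- Order of a vector of series (minimum over components). -/
def ordV {n : ℕ} (c : Fin n → Series X) : ℕ∞ := ⨅ i, ord (c i)

/-- Ultrametric on vectors of series. -/
def kappaV (σ : ℝ) {n : ℕ} (c d : Fin n → Series X) : ℝ := powE σ (ordV (c - d))

/-- Proper part `c - (c,∅)∅`. -/
def properPart (c : Series X) : Series X := fun w => if w = [] then 0 else c w

/-- Left concatenation by a letter: `x·s`. -/
def leftc (x : X) (s : Series X) : Series X := fun η =>
  match η with
  | [] => 0
  | y :: t => if y = x then s t else 0

end

noncomputable section

/-- `φ̄_d(η)` : the algebra homomorphism defining the multiplicative mixed composition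
product, with `φ̄_d(x_0)(w) = x_0 w` and `φ̄_d(x_i)(w) = x_i (d_i ⧢ w)`. -/
def phiWord {m : ℕ} (d : Fin m → Series (Fin (m + 1))) :
    List (Fin (m + 1)) → Series (Fin (m + 1)) → Series (Fin (m + 1))
  | [], w => w
  | i :: t, w =>
      Fin.cases (leftc 0 (phiWord d t w)) (fun j => leftc j.succ (sh (d j) (phiWord d t w))) i

/-- Multiplicative mixed composition product `c ∘̄ δ_d = Σ_η (c,η) φ̄_d(η)(1)`. -/
def mix {m : ℕ} (c : Series (Fin (m + 1))) (d : Fin m → Series (Fin (m + 1))) :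
    Series (Fin (m + 1)) := fun η =>
  ∑ k ∈ Finset.range (η.length + 1),
    ∑ v : List.Vector (Fin (m + 1)) k, c v.toList * phiWord d v.toList one η

/-- `ψ_e(η)` : the algebra homomorphism defining the composition product, with
`ψ_e(x'_i)(w) = x_0 (e_i ⧢ w)`, `e_0 = 1∅`. -/
def psiWord {ℓ m : ℕ} (e : Fin ℓ → Series (Fin (m + 1))) :
    List (Fin (ℓ + 1)) → Series (Fin (m + 1)) → Series (Fin (m + 1))
  | [], w => w
  | i :: t, w => leftc 0 (sh (Fin.cases one e i) (psiWord e t w))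

/-- Composition product `c ∘ e = Σ_η (c,η) ψ_e(η)(1)`. -/
def comp {ℓ m : ℕ} (c : Series (Fin (ℓ + 1))) (e : Fin ℓ → Series (Fin (m + 1))) :
    Series (Fin (m + 1)) := fun η =>
  ∑ k ∈ Finset.range (η.length + 1),
    ∑ v : List.Vector (Fin (ℓ + 1)) k, c v.toList * psiWord e v.toList one η

/-- The multiplicative composition product on `δ`-series:
`δ_c ∘ δ_d = δ_{d ⧢ (c ∘̄ δ_d)}`, expressed on the underlying series. -/
def star {m : ℕ} (c d : Fin m → Series (Fin (m + 1))) : Fin m → Series (Fin (m + 1)) :=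
  fun i => sh (d i) (mix (c i) d)

/-- The all-ones series vector (generating series of the identity `δ_1`). -/
def oneV {X : Type*} [DecidableEq X] (m : ℕ) : Fin m → Series X := fun _ => one

open Classical in
/-- The inverse `d^{∘-1}` in the multiplicative dynamic output feedback group: the unique
solution of `e = d^{⧢-1} ∘̄ δ_e`. -/
def dynInv {m : ℕ} (d : Fin m → Series (Fin (m + 1))) : Fin m → Series (Fin (m + 1)) :=
  if h : ∃ e : Fin m → Series (Fin (m + 1)), e = fun i => mix (shInv (d i)) e then h.choose
  else oneV m

/-- Shuffle power of a family: `c^{⧢n} = c_1^{⧢n_1} ⧢ ⋯ ⧢ c_ℓ^{⧢n_ℓ}`. -/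
def shFam {X : Type*} [DecidableEq X] {ℓ : ℕ} (c : Fin ℓ → Series X) (n : Fin ℓ →₀ ℕ) :
    Series X :=
  (List.finRange ℓ).foldr (fun i acc => sh (shpow (c i) (n i)) acc) one

/-- Wiener-Fliess composition product `d ∘̂ c = Σ_{η∈X̃*} (d,η) c^{⧢η}` of a commutative
series `d` with a (proper) noncommutative series vector `c`. -/
def wf {X : Type*} [DecidableEq X] {ℓ : ℕ} (d : MvPowerSeries (Fin ℓ) ℝ)
    (c : Fin ℓ → Series X) : Series X := fun η =>
  ∑ n ∈ Finset.Iic (Finsupp.equivFunOnFinite.symm fun _ : Fin ℓ => η.length),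
    MvPowerSeries.coeff n d * shFam c n η

end



noncomputable section
set_option linter.unusedSectionVars false
variable {X : Type*} [DecidableEq X]

def shl (x : X) (s : Series X) : Series X := fun w => s (x :: w)

lemma sh_nil (a b : Series X) : sh a b [] = a [] * b [] := rfl
lemma sh_cons (a b : Series X) (x : X) (t : List X) :
    sh a b (x :: t) = sh (shl x a) b t + sh a (shl x b) t := rfl

lemma sh_congr' : ∀ (η : List X) (a a' b b' : Series X),
    (∀ w : List X, w.length ≤ η.length → a w = a' w) →
    (∀ w : List X, w.length ≤ η.length → b w = b' w) →
    sh a b η = sh a' b' η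
  | [], a, a', b, b', ha, hb => by
      simp [sh_nil, ha [] (by simp), hb [] (by simp)]
  | x :: t, a, a', b, b', ha, hb => by
      rw [sh_cons, sh_cons,
        sh_congr' t (shl x a) (shl x a') b b'
          (fun w hw => ha (x :: w) (by simpa using Nat.succ_le_succ hw))
          (fun w hw => hb w (Nat.le_succ_of_le hw)),
        sh_congr' t a a' (shl x b) (shl x b')
          (fun w hw => ha w (Nat.le_succ_of_le hw))
          (fun w hw => hb (x :: w) (by simpa using Nat.succ_le_succ hw))]

lemma sh_add_left : ∀ (η : List X) (a b t : Series X),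
    sh (a + b) t η = sh a t η + sh b t η
  | [], a, b, t => by simp [sh_nil, add_mul]
  | x :: w, a, b, t => by
      rw [sh_cons, sh_cons, sh_cons]
      have h1 : shl x (a + b) = shl x a + shl x b := rfl
      rw [h1, sh_add_left w, sh_add_left w]
      ring

lemma sh_add_right (η : List X) (a s t : Series X) :
    sh a (s + t) η = sh a s η + sh a t η := by
  induction η generalizing a s t with
  | nil => simp [sh_nil, mul_add]
  | cons x w ih =>
      rw [sh_cons, sh_cons, sh_cons]
      have h1 : shl x (s + t) = shl x s + shl x t := rfl
      rw [h1, ih, ih]; ring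

lemma sh_smul_left (η : List X) (r : ℝ) (a t : Series X) :
    sh (fun w => r * a w) t η = r * sh a t η := by
  induction η generalizing a t with
  | nil => simp [sh_nil]; ring
  | cons x w ih =>
      rw [sh_cons, sh_cons]
      have h1 : shl x (fun w => r * a w) = fun w => r * shl x a w := rfl
      rw [h1, ih, ih]; ring

lemma sh_smul_right (η : List X) (r : ℝ) (a t : Series X) :
    sh a (fun w => r * t w) η = r * sh a t η := by
  induction η generalizing a t with
  | nil => simp [sh_nil]; ring
  | cons x w ih =>
      rw [sh_cons, sh_cons]
      have h1 : shl x (fun w => r * t w) = fun w => r * shl x t w := rfl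
      rw [h1, ih, ih]; ring

lemma sh_zero_left (η : List X) (t : Series X) : sh 0 t η = 0 := by
  have h : (0 : Series X) = fun w => (0:ℝ) * (0:Series X) w := by funext w; simp
  rw [h, sh_smul_left]; ring

lemma sh_zero_right (η : List X) (t : Series X) : sh t 0 η = 0 := by
  have h : (0 : Series X) = fun w => (0:ℝ) * (0:Series X) w := by funext w; simp
  rw [h, sh_smul_right]; ring

lemma sh_sub_left (η : List X) (a b t : Series X) :
    sh (fun w => a w - b w) t η = sh a t η - sh b t η := by
  have h : (fun w => a w - b w) = a + (fun w => (-1 : ℝ) * b w) := by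
    funext w; simp; ring
  rw [h, sh_add_left, sh_smul_left]; ring

lemma sh_sum_left {ι : Type*} (s : Finset ι) (f : ι → Series X) (t : Series X) (η : List X) :
    sh (fun w => ∑ i ∈ s, f i w) t η = ∑ i ∈ s, sh (f i) t η := by
  classical
  induction s using Finset.induction with
  | empty => simp only [Finset.sum_empty]; exact sh_zero_left η t
  | insert _ _ hi ih =>
      rename_i a s
      have h : (fun w => ∑ i ∈ insert a s, f i w)
          = f a + fun w => ∑ i ∈ s, f i w := by
        funext w; simp [Finset.sum_insert hi]
      rw [h, sh_add_left, ih, Finset.sum_insert hi]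

lemma sh_sum_right {ι : Type*} (s : Finset ι) (f : ι → Series X) (t : Series X) (η : List X) :
    sh t (fun w => ∑ i ∈ s, f i w) η = ∑ i ∈ s, sh t (f i) η := by
  classical
  induction s using Finset.induction with
  | empty => simp only [Finset.sum_empty]; exact sh_zero_right η t
  | insert _ _ hi ih =>
      rename_i a s
      have h : (fun w => ∑ i ∈ insert a s, f i w)
          = f a + fun w => ∑ i ∈ s, f i w := by
        funext w; simp [Finset.sum_insert hi]
      rw [h, sh_add_right, ih, Finset.sum_insert hi]

lemma sh_comm (η : List X) (a b : Series X) : sh a b η = sh b a η := by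
  induction η generalizing a b with
  | nil => simp [sh_nil, mul_comm]
  | cons x w ih => rw [sh_cons, sh_cons, ih (shl x a) b, ih a (shl x b)]; ring

lemma sh_assoc (η : List X) (a b c : Series X) :
    sh (sh a b) c η = sh a (sh b c) η := by
  induction η generalizing a b c with
  | nil => simp [sh_nil]; ring
  | cons x w ih =>
      rw [sh_cons, sh_cons]
      have h1 : shl x (sh a b) = sh (shl x a) b + sh a (shl x b) := by
        funext v; exact sh_cons a b x v
      have h2 : shl x (sh b c) = sh (shl x b) c + sh b (shl x c) := by
        funext v; exact sh_cons b c x v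
      rw [h1, h2, sh_add_left, sh_add_right, ih, ih, ih]
      ring

lemma sh_one_left (η : List X) (a : Series X) : sh one a η = a η := by
  induction η generalizing a with
  | nil => simp [sh_nil, one]
  | cons x w ih =>
      rw [sh_cons]
      have h1 : shl x (one : Series X) = 0 := by
        funext v; simp [shl, one]
      rw [h1, sh_zero_left, ih]; simp [shl]

lemma sh_one_right (η : List X) (a : Series X) : sh a one η = a η := by
  rw [sh_comm]; exact sh_one_left η a


def OrdGe (s : Series X) (p : ℕ) : Prop := ∀ η : List X, η.length < p → s η = 0

lemma ordGe_zero (s : Series X) : OrdGe s 0 := fun η h => absurd h (Nat.not_lt_zero _)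

lemma sh_ordGe : ∀ (p q : ℕ) (s t : Series X), OrdGe s p → OrdGe t q →
    OrdGe (sh s t) (p + q) := by
  intro p q s t hs ht η
  induction η generalizing p q s t with
  | nil =>
      intro h
      rw [sh_nil]
      by_cases hp : 0 < p
      · rw [hs [] hp]; ring
      · have hq : 0 < q := by omega
        rw [ht [] hq]; ring
  | cons x w ih =>
      intro h
      rw [sh_cons]
      have h1 : sh (shl x s) t w = 0 := by
        by_cases hp : 0 < p
        · exact ih (p-1) q (shl x s) t
            (fun v hv => hs (x :: v) (by simp; omega)) ht (by simp at h ⊢; omega)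
        · exact ih 0 q (shl x s) t (ordGe_zero _) ht (by simp at h ⊢; omega)
      have h2 : sh s (shl x t) w = 0 := by
        by_cases hq : 0 < q
        · exact ih p (q-1) s (shl x t)
            hs (fun v hv => ht (x :: v) (by simp; omega)) (by simp at h ⊢; omega)
        · exact ih p 0 s (shl x t) hs (ordGe_zero _) (by simp at h ⊢; omega)
      rw [h1, h2, add_zero]

lemma ordGe_one {s : Series X} (h : s [] = 0) : OrdGe s 1 := by
  intro η hη
  have : η = [] := by cases η <;> simp_all
  rwa [this]

lemma shpow_ordGe {s : Series X} (h : s [] = 0) (k : ℕ) : OrdGe (shpow s k) k := by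
  induction k with
  | zero => exact ordGe_zero _
  | succ n ih =>
      have := sh_ordGe 1 n s (shpow s n) (ordGe_one h) ih
      simpa [shpow, Nat.add_comm] using this

lemma shpow_add (a b : ℕ) (s : Series X) (η : List X) :
    shpow s (a + b) η = sh (shpow s a) (shpow s b) η := by
  induction a generalizing η with
  | zero => simp [shpow, sh_one_left]
  | succ n ih =>
      have e1 : n + 1 + b = (n + b) + 1 := by omega
      rw [e1]
      show sh s (shpow s (n + b)) η = _
      have e2 : shpow s (n + b) = sh (shpow s n) (shpow s b) := funext ih
      rw [e2, ← sh_assoc]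
      rfl

lemma sh_assoc' (a b c : Series X) : sh (sh a b) c = sh a (sh b c) :=
  funext fun η => sh_assoc η a b c

lemma sh_comm' (a b : Series X) : sh a b = sh b a :=
  funext fun η => sh_comm η a b

lemma sh_one_left' (a : Series X) : sh one a = a := funext fun η => sh_one_left η a

lemma sh_mul_mul (a b e f : Series X) :
    sh (sh a b) (sh e f) = sh (sh a e) (sh b f) := by
  rw [sh_assoc' a b (sh e f), sh_assoc' a e (sh b f)]
  congr 1
  rw [← sh_assoc' b e f, ← sh_assoc' e b f, sh_comm' b e]

def famFold {ℓ : ℕ} (c : Fin ℓ → Series X) (g : Fin ℓ → ℕ) (L : List (Fin ℓ)) : Series X :=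
  L.foldr (fun i acc => sh (shpow (c i) (g i)) acc) one

lemma famFold_add {ℓ : ℕ} (c : Fin ℓ → Series X) (g g' : Fin ℓ → ℕ) (L : List (Fin ℓ)) :
    famFold c (fun i => g i + g' i) L = sh (famFold c g L) (famFold c g' L) := by
  induction L with
  | nil =>
      show (one : Series X) = sh one one
      rw [sh_one_left']
  | cons j L ih =>
      show sh (shpow (c j) (g j + g' j)) (famFold c (fun i => g i + g' i) L) = _
      rw [ih, funext (shpow_add (g j) (g' j) (c j)), sh_mul_mul]
      rfl

lemma famFold_zero {ℓ : ℕ} (c : Fin ℓ → Series X) (L : List (Fin ℓ)) :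
    famFold c (fun _ => 0) L = one := by
  induction L with
  | nil => rfl
  | cons j L ih =>
      show sh (shpow (c j) 0) (famFold c (fun _ => 0) L) = one
      rw [ih]; exact sh_one_left' one

lemma famFold_ordGe {ℓ : ℕ} {c : Fin ℓ → Series X} (hc : ∀ j, c j [] = 0)
    (g : Fin ℓ → ℕ) {i : Fin ℓ} : ∀ L : List (Fin ℓ), i ∈ L → OrdGe (famFold c g L) (g i) := by
  intro L
  induction L with
  | nil => intro h; exact absurd h List.not_mem_nil
  | cons j L ih =>
      intro hmem
      by_cases hij : j = i
      · subst hij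
        have h1 : OrdGe (shpow (c j) (g j)) (g j) := shpow_ordGe (hc j) (g j)
        have := sh_ordGe (g j) 0 _ _ h1 (ordGe_zero (famFold c g L))
        simpa [famFold] using this
      · have hiL : i ∈ L := by
          rcases List.mem_cons.1 hmem with h | h
          · exact absurd h.symm hij
          · exact h
        have := sh_ordGe 0 (g i) (shpow (c j) (g j)) _ (ordGe_zero _) (ih hiL)
        simpa [famFold] using this

lemma shFam_eq_famFold {ℓ : ℕ} (c : Fin ℓ → Series X) (n : Fin ℓ →₀ ℕ) :
    shFam c n = famFold c (fun i => n i) (List.finRange ℓ) := rfl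

lemma shFam_add {ℓ : ℕ} (c : Fin ℓ → Series X) (a b : Fin ℓ →₀ ℕ) :
    shFam c (a + b) = sh (shFam c a) (shFam c b) := by
  rw [shFam_eq_famFold, shFam_eq_famFold, shFam_eq_famFold]
  have h : (fun i => (a + b) i) = fun i => a i + b i := by
    funext i; simp
  rw [h, famFold_add]

lemma shFam_zero {ℓ : ℕ} (c : Fin ℓ → Series X) : shFam c 0 = one := by
  rw [shFam_eq_famFold]
  have h : (fun i => (0 : Fin ℓ →₀ ℕ) i) = fun _ : Fin ℓ => 0 := by funext i; simp
  rw [h, famFold_zero]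

lemma shFam_ordGe {ℓ : ℕ} {c : Fin ℓ → Series X} (hc : ∀ j, c j [] = 0)
    (n : Fin ℓ →₀ ℕ) (i : Fin ℓ) : OrdGe (shFam c n) (n i) := by
  rw [shFam_eq_famFold]
  exact famFold_ordGe hc _ _ (List.mem_finRange i)

def capN (ℓ N : ℕ) : Fin ℓ →₀ ℕ := Finsupp.equivFunOnFinite.symm fun _ : Fin ℓ => N

lemma capN_apply (ℓ N : ℕ) (i : Fin ℓ) : capN ℓ N i = N :=
  congrFun (Finsupp.equivFunOnFinite.apply_symm_apply fun _ : Fin ℓ => N) i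

lemma le_capN {ℓ N : ℕ} {n : Fin ℓ →₀ ℕ} : n ≤ capN ℓ N ↔ ∀ i, n i ≤ N := by
  rw [Finsupp.le_def]
  exact forall_congr' fun i => by rw [capN_apply]

def wfN {ℓ : ℕ} (d : MvPowerSeries (Fin ℓ) ℝ) (c : Fin ℓ → Series X) (N : ℕ) :
    Series X := fun η =>
  ∑ n ∈ Finset.Iic (capN ℓ N), MvPowerSeries.coeff n d * shFam c n η

lemma wf_eq_wfN {ℓ : ℕ} (d : MvPowerSeries (Fin ℓ) ℝ) {c : Fin ℓ → Series X}
    (hc : ∀ j, c j [] = 0) {N : ℕ} {η : List X} (hη : η.length ≤ N) :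
    wf d c η = wfN d c N η := by
  refine Finset.sum_subset ?_ ?_
  · intro n hn
    rw [Finset.mem_Iic] at hn ⊢
    rw [le_capN]
    intro i
    exact le_trans ((Finsupp.le_def).1 hn i) (le_trans (le_of_eq (capN_apply _ _ i)) hη)
  · intro n hn hn'
    rw [Finset.mem_Iic] at hn'
    have hn'' : ¬ n ≤ capN ℓ η.length := hn'
    rw [le_capN] at hn''
    push_neg at hn''
    obtain ⟨i, hi⟩ := hn''
    rw [shFam_ordGe hc n i η hi, mul_zero]


lemma wf_mul {ℓ : ℕ} (d d' : MvPowerSeries (Fin ℓ) ℝ) {c : Fin ℓ → Series X}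
    (hc : ∀ j, c j [] = 0) : wf (d * d') c = sh (wf d c) (wf d' c) := by
  classical
  funext η
  set N := η.length with hN
  set S := Finset.Iic (capN ℓ N) with hS
  set g : (Fin ℓ →₀ ℕ) × (Fin ℓ →₀ ℕ) → ℝ := fun p =>
    MvPowerSeries.coeff p.1 d * MvPowerSeries.coeff p.2 d' * shFam c (p.1 + p.2) η
    with hg
  have key0 : ∀ p : (Fin ℓ →₀ ℕ) × (Fin ℓ →₀ ℕ), ¬ p.1 + p.2 ≤ capN ℓ N → g p = 0 := by
    intro p hp
    rw [le_capN] at hp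
    push_neg at hp
    obtain ⟨i, hi⟩ := hp
    rw [hg]
    simp only []
    rw [shFam_ordGe hc _ i η hi, mul_zero]
  -- RHS
  have hR : sh (wf d c) (wf d' c) η = sh (wfN d c N) (wfN d' c N) η :=
    sh_congr' η _ _ _ _ (fun w hw => wf_eq_wfN d hc hw) (fun w hw => wf_eq_wfN d' hc hw)
  have hR2 : sh (wfN d c N) (wfN d' c N) η = ∑ a ∈ S, ∑ b ∈ S, g (a, b) := by
    have e1 : sh (wfN d c N) (wfN d' c N) η
        = ∑ a ∈ S, sh (fun w => MvPowerSeries.coeff a d * shFam c a w) (wfN d' c N) η :=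
      sh_sum_left S _ _ η
    rw [e1]
    refine Finset.sum_congr rfl fun a _ => ?_
    rw [sh_smul_left]
    have e2 : sh (shFam c a) (wfN d' c N) η
        = ∑ b ∈ S, sh (shFam c a) (fun w => MvPowerSeries.coeff b d' * shFam c b w) η :=
      sh_sum_right S _ _ η
    rw [e2, Finset.mul_sum]
    refine Finset.sum_congr rfl fun b _ => ?_
    rw [sh_smul_right, ← shFam_add, hg]
    ring
  -- LHS
  have hL : wf (d * d') c η = ∑ n ∈ S, ∑ p ∈ Finset.HasAntidiagonal.antidiagonal n, g p := by
    show ∑ n ∈ S, MvPowerSeries.coeff n (d * d') * shFam c n η = _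
    refine Finset.sum_congr rfl fun n hn => ?_
    rw [MvPowerSeries.coeff_mul, Finset.sum_mul]
    refine Finset.sum_congr rfl fun p hp => ?_
    rw [Finset.HasAntidiagonal.mem_antidiagonal] at hp
    rw [hg]
    simp only []
    rw [hp]
  have hdisj : (S : Set (Fin ℓ →₀ ℕ)).PairwiseDisjoint Finset.HasAntidiagonal.antidiagonal := by
    intro a _ b _ hab
    refine Finset.disjoint_left.2 fun p hpa hpb => ?_
    rw [Finset.HasAntidiagonal.mem_antidiagonal] at hpa hpb
    exact hab (hpa ▸ hpb)
  have hL2 : wf (d * d') c η = ∑ p ∈ S.biUnion Finset.HasAntidiagonal.antidiagonal, g p := by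
    rw [hL, Finset.sum_biUnion hdisj]
  have hsub : S.biUnion Finset.HasAntidiagonal.antidiagonal ⊆ S ×ˢ S := by
    intro p hp
    rw [Finset.mem_biUnion] at hp
    obtain ⟨n, hn, hpn⟩ := hp
    rw [Finset.HasAntidiagonal.mem_antidiagonal] at hpn
    rw [Finset.mem_Iic] at hn
    rw [Finset.mem_product, hS, Finset.mem_Iic, Finset.mem_Iic]
    constructor
    · exact le_trans (hpn ▸ le_self_add) hn
    · exact le_trans (hpn ▸ le_add_self) hn
  have hL3 : wf (d * d') c η = ∑ p ∈ S ×ˢ S, g p := by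
    rw [hL2]
    refine Finset.sum_subset hsub fun p hpS hp => ?_
    apply key0
    intro hle
    exact hp (Finset.mem_biUnion.2
      ⟨p.1 + p.2, Finset.mem_Iic.2 hle, Finset.HasAntidiagonal.mem_antidiagonal.2 rfl⟩)
  rw [hL3, hR, hR2, Finset.sum_product]


lemma sh_shInv {s : Series X} (hs : s [] ≠ 0) (η : List X) : sh s (shInv s) η = one η := by
  set N := η.length with hN
  set s' := sprime s with hs'
  have hs'0 : s' [] = 0 := by simp [hs', sprime]
  set T : Series X := fun w => (s [])⁻¹ * ∑ k ∈ Finset.range (N + 1), shpow s' k w with hT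
  have h1 : sh s (shInv s) η = sh s T η := by
    refine sh_congr' η s s (shInv s) T (fun w _ => rfl) (fun w hw => ?_)
    show (s [])⁻¹ * ∑ k ∈ Finset.range (w.length + 1), shpow s' k w = _
    rw [hT]
    congr 1
    refine Finset.sum_subset (Finset.range_subset_range.2 (by omega)) fun k _ hk' => ?_
    rw [Finset.mem_range] at hk'
    exact shpow_ordGe hs'0 k w (by omega)
  have h2 : sh s T η = (s [])⁻¹ * ∑ k ∈ Finset.range (N + 1), sh s (shpow s' k) η :=
    calc sh s T η
        = (s [])⁻¹ * sh s (fun w => ∑ k ∈ Finset.range (N + 1), shpow s' k w) η :=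
          sh_smul_right η _ s _
      _ = (s [])⁻¹ * ∑ k ∈ Finset.range (N + 1), sh s (shpow s' k) η := by
          rw [sh_sum_right]
  have hdec : s = fun w => s [] * (one w - s' w) := by
    funext w
    by_cases hw : w = []
    · subst hw; simp [one, hs', sprime]
    · simp only [one, hs', sprime, if_neg hw]
      field_simp
      ring
  have h3 : ∀ k, sh s (shpow s' k) η = s [] * (shpow s' k η - shpow s' (k + 1) η) := by
    intro k
    calc sh s (shpow s' k) η
        = sh (fun w => s [] * (one w - s' w)) (shpow s' k) η := by rw [← hdec]
      _ = s [] * sh (fun w => one w - s' w) (shpow s' k) η :=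
          sh_smul_left η (s []) (fun w => one w - s' w) (shpow s' k)
      _ = s [] * (sh one (shpow s' k) η - sh s' (shpow s' k) η) := by
          rw [sh_sub_left]
      _ = s [] * (shpow s' k η - shpow s' (k + 1) η) := by
          rw [sh_one_left]; rfl
  have h4 : ∑ k ∈ Finset.range (N + 1), sh s (shpow s' k) η
      = s [] * (one η - shpow s' (N + 1) η) := by
    calc ∑ k ∈ Finset.range (N + 1), sh s (shpow s' k) η
        = ∑ k ∈ Finset.range (N + 1), s [] * (shpow s' k η - shpow s' (k + 1) η) :=
          Finset.sum_congr rfl fun k _ => h3 k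
      _ = s [] * ∑ k ∈ Finset.range (N + 1), (shpow s' k η - shpow s' (k + 1) η) := by
          rw [Finset.mul_sum]
      _ = s [] * (shpow s' 0 η - shpow s' (N + 1) η) := by
          rw [Finset.sum_range_sub' (fun k => shpow s' k η)]
      _ = s [] * (one η - shpow s' (N + 1) η) := rfl
  have h5 : shpow s' (N + 1) η = 0 := shpow_ordGe hs'0 (N + 1) η (by omega)
  rw [h1, h2, h4, h5]
  field_simp
  ring

lemma sh_lower : ∀ (η : List X) (s t t' : Series X),
    (∀ w : List X, w.length < η.length → t w = t' w) →
    sh s t η - s [] * t η = sh s t' η - s [] * t' η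
  | [], s, t, t', _ => by simp [sh_nil]
  | x :: v, s, t, t', h => by
      rw [sh_cons, sh_cons]
      have h1 : sh (shl x s) t v = sh (shl x s) t' v :=
        sh_congr' v _ _ t t' (fun w _ => rfl)
          (fun w hw => h w (by simpa using Nat.lt_succ_of_le hw))
      have h2 : sh s (shl x t) v - s [] * shl x t v
          = sh s (shl x t') v - s [] * shl x t' v :=
        sh_lower v s (shl x t) (shl x t')
          (fun w hw => h (x :: w) (by simpa using Nat.succ_lt_succ hw))
      have e1 : t (x :: v) = shl x t v := rfl
      have e2 : t' (x :: v) = shl x t' v := rfl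
      rw [h1, e1, e2]
      linarith [h2]

lemma sh_inv_unique {s t t' : Series X} (hs : s [] ≠ 0)
    (h1 : ∀ η, sh s t η = one η) (h2 : ∀ η, sh s t' η = one η) : t = t' := by
  suffices H : ∀ (n : ℕ) (η : List X), η.length = n → t η = t' η from
    funext fun η => H η.length η rfl
  intro n
  induction n using Nat.strong_induction_on with
  | _ n ih =>
      intro η hη
      subst hη
      have hlow : ∀ w : List X, w.length < η.length → t w = t' w :=
        fun w hw => ih w.length hw w rfl
      have := sh_lower η s t t' hlow
      rw [h1 η, h2 η] at this
      have : s [] * t η = s [] * t' η := by linarith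
      exact mul_left_cancel₀ hs this


lemma wf_one {ℓ : ℕ} (c : Fin ℓ → Series X) : wf (1 : MvPowerSeries (Fin ℓ) ℝ) c = one := by
  classical
  funext η
  show ∑ n ∈ Finset.Iic (capN ℓ η.length),
      MvPowerSeries.coeff n (1 : MvPowerSeries (Fin ℓ) ℝ) * shFam c n η = one η
  rw [Finset.sum_eq_single (0 : Fin ℓ →₀ ℕ)]
  · rw [MvPowerSeries.coeff_one, if_pos rfl, shFam_zero, one_mul]
  · intro n _ hne
    rw [MvPowerSeries.coeff_one, if_neg hne, zero_mul]
  · intro h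
    exact absurd (Finset.mem_Iic.2 zero_le) h

lemma capN_zero (ℓ : ℕ) : capN ℓ 0 = 0 := by
  ext i
  rw [capN_apply]
  rfl

lemma wf_nil {ℓ : ℕ} (d : MvPowerSeries (Fin ℓ) ℝ) (c : Fin ℓ → Series X) :
    wf d c [] = MvPowerSeries.constantCoeff d := by
  show ∑ n ∈ Finset.Iic (capN ℓ 0), MvPowerSeries.coeff n d * shFam c n [] = _
  rw [capN_zero]
  have hIic : Finset.Iic (0 : Fin ℓ →₀ ℕ) = {0} := by
    ext n
    simp [Finset.mem_Iic, le_zero_iff]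
  rw [hIic, Finset.sum_singleton, shFam_zero]
  show MvPowerSeries.coeff 0 d * 1 = _
  rw [mul_one, MvPowerSeries.coeff_zero_eq_constantCoeff]

end

/-- The Wiener-Fliess composition product turns Cauchy products into
shuffle products: `(d · d') ∘̂ c = (d ∘̂ c) ⧢ (d' ∘̂ c)` for proper `c`; consequently for
purely improper `d`, `d⁻¹ ∘̂ c = (d ∘̂ c)^{⧢-1}`. -/
theorem wf_cauchy_to_shuffle (k ℓ m : ℕ)
    (d d' : Fin k → MvPowerSeries (Fin ℓ) ℝ) (c : Fin ℓ → Series (Fin (m + 1)))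
    (hc : ∀ i, c i [] = 0) :
    (∀ i : Fin k, wf (d i * d' i) c = sh (wf (d i) c) (wf (d' i) c)) ∧
    ((∀ i, MvPowerSeries.constantCoeff (d i) ≠ 0) →
      ∀ i : Fin k, wf (d i)⁻¹ c = shInv (wf (d i) c)) := by
  refine ⟨fun i => wf_mul (d i) (d' i) hc, fun hd i => ?_⟩
  have hnz : wf (d i) c [] ≠ 0 := by
    rw [wf_nil]
    exact hd i
  refine sh_inv_unique hnz (fun η => ?_) (fun η => sh_shInv hnz η)
  rw [← wf_mul (d i) (d i)⁻¹ hc, MvPowerSeries.mul_inv_cancel _ (hd i), wf_one]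


end FPS
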